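/- (One-step inequality for the extragradient method.) Let E be a real Hilbert space, F : E → E a μ-strongly monotone and L-Lipschitz operator with F(x*) = 0, and η > 0. Given x ∈ E, define the extragradient step by x̃ = x − ηF(x) and x⁺ = x − ηF(x̃). Then ‖x⁺ − x*‖² ≤ (1 − ημ)‖x − x*‖² + (η²L² − 1 + 2ημ)‖x − x̃‖². -/
import Mathlib


open RealInnerProductSpace

theorem extragradient_one_step_inequality
    {E : Type*} [NormedAddCommGroup E] [InnerProductSpace ℝ E] [CompleteSpace E]
    (F : E → E) (μ L : ℝ) (hμ : 0 < μ)
    (hsm : ∀ x y, ⟪F x - F y, x - y⟫ ≥ μ * ‖x - y‖ ^ 2)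
    (hlip : ∀ x y, ‖F x - F y‖ ≤ L * ‖x - y‖)
    (xstar : E) (hfix : F xstar = 0)
    (η : ℝ) (hη : 0 < η) (x : E) :
    ‖(x - η • F (x - η • F x)) - xstar‖ ^ 2 ≤
      (1 - η * μ) * ‖x - xstar‖ ^ 2
        + (η ^ 2 * L ^ 2 - 1 + 2 * η * μ) * ‖x - (x - η • F x)‖ ^ 2 := by
  set v := F x with hv
  set xt := x - η • v with hxt
  set w := F xt with hw
  set u := x - xstar with hu
  have hsm' : ⟪w, xt - xstar⟫ ≥ μ * ‖xt - xstar‖ ^ 2 := by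
    have h := hsm xt xstar
    rwa [hfix, sub_zero] at h
  have hl : ‖w - v‖ ≤ L * ‖xt - x‖ := hlip xt x
  have hl2 : ‖w - v‖ ^ 2 ≤ L ^ 2 * ‖xt - x‖ ^ 2 := by
    nlinarith [norm_nonneg (w - v), norm_nonneg (xt - x)]
  -- expansions
  have E1 : ‖(x - η • w) - xstar‖ ^ 2
      = ‖u‖ ^ 2 - 2 * (η * ⟪w, u⟫) + η ^ 2 * ‖w‖ ^ 2 := by
    have h : (x - η • w) - xstar = u - η • w := by rw [hu]; abel
    rw [h, @norm_sub_sq_real, real_inner_smul_right, norm_smul, mul_pow,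
      Real.norm_eq_abs, sq_abs, real_inner_comm]
  have E2 : ‖xt - xstar‖ ^ 2 = ‖u‖ ^ 2 - 2 * (η * ⟪v, u⟫) + η ^ 2 * ‖v‖ ^ 2 := by
    have h : xt - xstar = u - η • v := by rw [hxt, hu]; abel
    rw [h, @norm_sub_sq_real, real_inner_smul_right, norm_smul, mul_pow,
      Real.norm_eq_abs, sq_abs, real_inner_comm]
  have E3 : ⟪w, xt - xstar⟫ = ⟪w, u⟫ - η * ⟪w, v⟫ := by
    have h : xt - xstar = u - η • v := by rw [hxt, hu]; abel
    rw [h, inner_sub_right, real_inner_smul_right]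
  have E4 : ‖xt - x‖ ^ 2 = η ^ 2 * ‖v‖ ^ 2 := by
    have h : xt - x = -(η • v) := by rw [hxt]; abel
    rw [h, norm_neg, norm_smul, mul_pow, Real.norm_eq_abs, sq_abs]
  have E5 : ‖x - xt‖ ^ 2 = η ^ 2 * ‖v‖ ^ 2 := by
    have h : x - xt = η • v := by rw [hxt]; abel
    rw [h, norm_smul, mul_pow, Real.norm_eq_abs, sq_abs]
  have E6 : ‖w - v‖ ^ 2 = ‖w‖ ^ 2 - 2 * ⟪w, v⟫ + ‖v‖ ^ 2 := by
    rw [@norm_sub_sq_real]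
  have E7 : (0:ℝ) ≤ ‖u‖ ^ 2 - 2 * (2 * η * ⟪v, u⟫) + (2*η) ^ 2 * ‖v‖ ^ 2 := by
    have h : (0:ℝ) ≤ ‖u - (2*η) • v‖ ^ 2 := sq_nonneg _
    rwa [@norm_sub_sq_real, real_inner_smul_right, real_inner_comm, norm_smul, mul_pow, Real.norm_eq_abs, sq_abs] at h
  rw [E1, E5]
  rw [E2, E3] at hsm'
  rw [E4, E6] at hl2
  nlinarith [mul_le_mul_of_nonneg_left hsm' (by positivity : (0:ℝ) ≤ 2*η),
    mul_le_mul_of_nonneg_left hl2 (sq_nonneg η),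
    mul_nonneg (mul_nonneg hη.le hμ.le) E7]
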